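/- Let B and C be perfect 𝔽_p-algebras (Frobenius bijective) and let B → C be a surjective ring homomorphism. Then the multiplication map C ⊗_B^L C → C is an isomorphism in the derived category; equivalently Tor_i^B(C, C) = 0 for i > 0 and C ⊗_B C ≅ C. -/

import Mathlib

open CategoryTheory

universe u

namespace DIPS

variable {B : Type u} [CommRing B] {p : ℕ}

section Roots
variable (hp : p.Prime) [ExpChar B p] [PerfectRing B p]

/-- p-th root -/
noncomputable def rt (B : Type u) [CommRing B] (p : ℕ) [ExpChar B p] [PerfectRing B p] :
    B → B := fun x => (frobeniusEquiv B p).symm x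

lemma frobenius_rt (x : B) : frobenius B p (rt B p x) = x :=
  (frobeniusEquiv B p).apply_symm_apply x

lemma rt_pow (x : B) : (rt B p x) ^ p = x := frobenius_rt x

/-- the set of iterated p-th roots of elements of L -/
def genSet (L : List B) [ExpChar B p] [PerfectRing B p] : Set B :=
  {x | ∃ g ∈ L, ∃ k : ℕ, x = (rt B p)^[k] g}

/-- the perfect ideal generated by a list -/
noncomputable def JL (p : ℕ) [ExpChar B p] [PerfectRing B p] (L : List B) : Ideal B :=
  Ideal.span (genSet (p := p) L)

lemma rt_mem_genSet {L : List B} {x : B} (hx : x ∈ genSet (p := p) L) :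
    rt B p x ∈ genSet (p := p) L := by
  obtain ⟨g, hg, k, rfl⟩ := hx
  exact ⟨g, hg, k + 1, (Function.iterate_succ_apply' (rt B p) k g).symm⟩

lemma self_mem_genSet {L : List B} {g : B} (hg : g ∈ L) : g ∈ genSet (p := p) L :=
  ⟨g, hg, 0, rfl⟩

lemma genSet_cons (f : B) (L : List B) :
    genSet (p := p) (f :: L) = (Set.range fun k : ℕ => (rt B p)^[k] f) ∪ genSet (p := p) L := by
  ext x
  constructor
  · rintro ⟨g, hg, k, rfl⟩
    rcases List.mem_cons.1 hg with rfl | hg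
    · exact Or.inl ⟨k, rfl⟩
    · exact Or.inr ⟨g, hg, k, rfl⟩
  · rintro (⟨k, rfl⟩ | ⟨g, hg, k, rfl⟩)
    · exact ⟨f, List.mem_cons_self, k, rfl⟩
    · exact ⟨g, List.mem_cons_of_mem f hg, k, rfl⟩

lemma JL_cons (f : B) (L : List B) :
    JL p (f :: L) = Ideal.span (Set.range fun k : ℕ => (rt B p)^[k] f) ⊔ JL p L := by
  rw [JL, genSet_cons, Ideal.span_union]; rfl

/-- (P1): span of a root-closed set is closed under p-th roots of p-th powers -/
lemma span_rootClosed (S : Set B) (hS : ∀ x ∈ S, rt B p x ∈ S) :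
    ∀ x : B, x ^ p ∈ Ideal.span S → x ∈ Ideal.span S := by
  intro x hx
  obtain ⟨n, f, g, hsum⟩ := Submodule.mem_span_set'.1 hx
  have key : x = ∑ i : Fin n, rt B p (f i) * rt B p (g i : B) := by
    apply (frobeniusEquiv B p).injective
    have hx' : (frobeniusEquiv B p) x = x ^ p := rfl
    rw [hx', map_sum]
    have : ∀ i ∈ Finset.univ, (frobeniusEquiv B p) (rt B p (f i) * rt B p (g i : B))
        = f i • (g i : B) := by
      intro i _
      show frobenius B p _ = _
      rw [map_mul, frobenius_rt, frobenius_rt, smul_eq_mul]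
    rw [Finset.sum_congr rfl this, hsum]
  rw [key]
  exact Ideal.sum_mem _ fun i _ =>
    Ideal.mul_mem_left _ _ (Ideal.subset_span (hS _ (g i).2))

lemma rt_iterate_pow_eq (f : B) (k m : ℕ) :
    (rt B p)^[k] f = ((rt B p)^[k + m] f) ^ (p ^ m) := by
  induction m with
  | zero => simp
  | succ m ih =>
      have h1 : (rt B p)^[k + m] f = ((rt B p)^[k + m + 1] f) ^ p := by
        rw [Function.iterate_succ_apply', rt_pow]
      calc (rt B p)^[k] f = ((rt B p)^[k + m] f) ^ p ^ m := ih
        _ = (((rt B p)^[k + m + 1] f) ^ p) ^ p ^ m := by rw [h1]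
        _ = ((rt B p)^[k + (m + 1)] f) ^ p ^ (m + 1) := by
            rw [← pow_mul, ← pow_succ']; rfl

/-- (P2): elements of the perfect ideal of `f` are multiples of a single root -/
lemma mem_span_rootSet_factor (hp : 0 < p) {f a : B}
    (ha : a ∈ Ideal.span (Set.range fun k : ℕ => (rt B p)^[k] f)) :
    ∃ (N : ℕ) (c : B), a = c * (rt B p)^[N] f := by
  obtain ⟨n, cf, g, hsum⟩ := Submodule.mem_span_set'.1 ha
  have hk : ∀ i : Fin n, ∃ k : ℕ, (rt B p)^[k] f = (g i : B) := fun i => (g i).2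
  choose k hkeq using hk
  set N := Finset.univ.sup k with hN
  refine ⟨N, ∑ i : Fin n, cf i * ((rt B p)^[N] f) ^ (p ^ (N - k i) - 1), ?_⟩
  rw [Finset.sum_mul, ← hsum]
  apply Finset.sum_congr rfl
  intro i _
  have hle : k i ≤ N := Finset.le_sup (Finset.mem_univ i)
  have h2 : (g i : B) = ((rt B p)^[N] f) ^ (p ^ (N - k i)) := by
    rw [← hkeq i, rt_iterate_pow_eq f (k i) (N - k i), Nat.add_sub_cancel' hle]
  have h3 : ((rt B p)^[N] f) ^ (p ^ (N - k i))
      = ((rt B p)^[N] f) ^ (p ^ (N - k i) - 1) * (rt B p)^[N] f := by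
    conv_lhs => rw [← Nat.succ_pred_eq_of_pos (pow_pos hp _), pow_succ]
    rfl
  rw [smul_eq_mul, h2, h3, mul_assoc]

end Roots


section Modules

variable [ExpChar B p] [PerfectRing B p]
variable {M N : Type u} [AddCommGroup M] [Module B M] [AddCommGroup N] [Module B N]

lemma smulTop_map (I : Ideal B) (f : M →ₗ[B] N) {x : M}
    (hx : x ∈ I • (⊤ : Submodule B M)) : f x ∈ I • (⊤ : Submodule B N) := by
  refine Submodule.smul_induction_on hx (fun r hr m _ => ?_) (fun a b ha hb => ?_)
  · rw [map_smul]
    exact Submodule.smul_mem_smul hr Submodule.mem_top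
  · rw [map_add]; exact add_mem ha hb

lemma mem_smulTop_finsupp_iff {ι : Type u} (I : Ideal B) (v : ι →₀ B) :
    v ∈ I • (⊤ : Submodule B (ι →₀ B)) ↔ ∀ i, v i ∈ I := by
  constructor
  · intro hv i
    refine Submodule.smul_induction_on hv (fun r hr m _ => ?_) (fun a b ha hb => ?_)
    · exact Ideal.mul_mem_right _ _ hr
    · simpa using add_mem ha hb
  · intro hv
    rw [← Finsupp.sum_single v, Finsupp.sum]
    refine Submodule.sum_mem _ fun i _ => ?_
    have hsingle : Finsupp.single i (v i) = v i • Finsupp.single i (1 : B) := by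
      rw [Finsupp.smul_single, smul_eq_mul, mul_one]
    rw [hsingle]
    exact Submodule.smul_mem_smul (hv i) Submodule.mem_top

/-- Lemma R: torsion descent in projective modules over "relatively reduced" base -/
lemma torsion_descent (hp : 2 ≤ p) (I : Ideal B) (hI : ∀ x : B, x ^ p ∈ I → x ∈ I)
    [Module.Projective B M] (h : B) (x : M)
    (hx : h ^ p • x ∈ I • (⊤ : Submodule B M)) : h • x ∈ I • (⊤ : Submodule B M) := by
  obtain ⟨s, hs⟩ := Module.projective_def.1 ‹Module.Projective B M›
  have h1 : s (h ^ p • x) ∈ I • (⊤ : Submodule B (M →₀ B)) := smulTop_map I s hx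
  rw [map_smul] at h1
  have h2 : ∀ i, (h • s x) i ∈ I := by
    intro i
    have h3 : h ^ p * (s x) i ∈ I := by
      have := (mem_smulTop_finsupp_iff I _).1 h1 i
      simpa using this
    apply hI
    rw [Finsupp.smul_apply, smul_eq_mul]
    have hpe : p = (p - 1) + 1 := by omega
    have ha : (s x) i ^ p = (s x) i ^ (p - 1) * (s x) i := by
      conv_lhs => rw [hpe, pow_succ]
    have hkey : (h * (s x) i) ^ p = (h ^ p * (s x) i) * ((s x) i) ^ (p - 1) := by
      rw [mul_pow, ha]; ring
    rw [hkey]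
    exact Ideal.mul_mem_right _ _ h3
  have h4 : h • s x ∈ I • (⊤ : Submodule B (M →₀ B)) :=
    (mem_smulTop_finsupp_iff I _).2 h2
  have h5 := smulTop_map I (Finsupp.linearCombination B (id : M → M)) h4
  rw [map_smul, hs x] at h5
  exact h5

/-- decomposition of elements of (span of roots of f) • ⊤ -/
lemma smulTop_span_rootSet_factor (hp : 0 < p) (f : B) {a : M}
    (ha : a ∈ Ideal.span (Set.range fun k : ℕ => (rt B p)^[k] f) • (⊤ : Submodule B M)) :
    ∃ (N : ℕ) (z : M), a = (rt B p)^[N] f • z := by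
  refine Submodule.smul_induction_on ha (fun r hr m _ => ?_) ?_
  · obtain ⟨N, c, rfl⟩ := mem_span_rootSet_factor hp hr
    exact ⟨N, c • m, by rw [mul_comm, mul_smul]⟩
  · rintro a b ⟨N, z, rfl⟩ ⟨N', w, rfl⟩
    refine ⟨max N N', ((rt B p)^[max N N'] f) ^ (p ^ (max N N' - N) - 1) • z
      + ((rt B p)^[max N N'] f) ^ (p ^ (max N N' - N') - 1) • w, ?_⟩
    rw [smul_add, ← mul_smul, ← mul_smul]
    have key : ∀ K k : ℕ, k ≤ K →
        (rt B p)^[K] f * ((rt B p)^[K] f) ^ (p ^ (K - k) - 1) = (rt B p)^[k] f := by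
      intro K k hle
      rw [rt_iterate_pow_eq f k (K - k), Nat.add_sub_cancel' hle]
      conv_rhs => rw [← Nat.succ_pred_eq_of_pos (pow_pos hp _), pow_succ']
      rfl
    rw [key _ _ (le_max_left N N'), key _ _ (le_max_right N N')]

end Modules


section Chase

variable [ExpChar B p] [PerfectRing B p]
variable {C : Type u} [CommRing C] [Algebra B C]
variable {F : ℕ → Type u} [∀ n, AddCommGroup (F n)] [∀ n, Module B (F n)]

lemma genSet_mono {L L' : List B} (h : ∀ g ∈ L, g ∈ L') :
    genSet (p := p) L ⊆ genSet (p := p) L' := by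
  rintro x ⟨g, hg, k, rfl⟩
  exact ⟨g, h g hg, k, rfl⟩

lemma JL_nil : JL p ([] : List B) = ⊥ := by
  have : genSet (p := p) ([] : List B) = ∅ := by
    ext x; simp [genSet]
  rw [JL, this, Ideal.span_empty]

theorem main_claim (hp2 : 2 ≤ p)
    (d : ∀ n, F (n + 1) →ₗ[B] F n) (ε : F 0 →ₗ[B] C)
    (hproj : ∀ n, Module.Projective B (F n))
    (hdd : ∀ n (x : F (n + 2)), d n (d (n + 1) x) = 0)
    (hex : ∀ n (x : F (n + 1)), d n x = 0 → ∃ y, d (n + 1) y = x)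
    (hex0 : ∀ x : F 0, ε x = 0 → ∃ y, d 0 y = x)
    (L : List B) :
    (∀ g ∈ genSet (p := p) L, algebraMap B C g = 0) →
    ∀ n (x : F (n + 1)), d n x ∈ JL p L • (⊤ : Submodule B (F n)) →
      ∃ y : F (n + 2), x - d (n + 1) y ∈ JL p L • (⊤ : Submodule B (F (n + 1))) := by
  have hppos : 0 < p := by omega
  induction L with
  | nil =>
      intro _ n x hx
      rw [JL_nil, Submodule.bot_smul, Submodule.mem_bot] at hx
      obtain ⟨y, hy⟩ := hex n x hx
      exact ⟨y, by rw [hy, sub_self]; exact zero_mem _⟩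
  | cons f L' ih =>
      intro hL n x hx
      have hL' : ∀ g ∈ genSet (p := p) L', algebraMap B C g = 0 := fun g hg =>
        hL g (genSet_mono (fun a ha => List.mem_cons_of_mem f ha) hg)
      set I : Ideal B := JL p L' with hIdef
      set Jf : Ideal B := Ideal.span (Set.range fun k : ℕ => (rt B p)^[k] f) with hJfdef
      have hI : ∀ b : B, b ^ p ∈ I → b ∈ I :=
        span_rootClosed _ (fun b hb => rt_mem_genSet hb)
      rw [JL_cons, Submodule.sup_smul] at hx
      obtain ⟨a, ha, ι, hι, hsum⟩ := Submodule.mem_sup.1 hx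
      obtain ⟨N, z, rfl⟩ := smulTop_span_rootSet_factor hppos f ha
      set g : B := (rt B p)^[N] f with hgdef
      set h : B := (rt B p)^[N + 1] f with hhdef
      have hg : h ^ p = g := by
        rw [hhdef, hgdef, Function.iterate_succ_apply', rt_pow]
      have hhJf : h ∈ Jf := Ideal.subset_span ⟨N + 1, rfl⟩
      have hh1Jf : h ^ (p - 1) ∈ Jf := Ideal.pow_mem_of_mem _ hhJf _ (by omega)
      have hhC : algebraMap B C h = 0 :=
        hL h ⟨f, List.mem_cons_self, N + 1, rfl⟩
      have hcollapse : ∀ {m : ℕ} (w : F m), h ^ (p - 1) • (h • w) = g • w := by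
        intro m w
        rw [← mul_smul, ← pow_succ, show p - 1 + 1 = p by omega, hg]
      -- final packaging, common to both cases
      have hfinish : ∀ (β : F (n + 1)), β ∈ Jf • (⊤ : Submodule B (F (n + 1))) →
          d n (x - β) ∈ I • (⊤ : Submodule B (F n)) →
          ∃ y : F (n + 2),
            x - d (n + 1) y ∈ JL p (f :: L') • (⊤ : Submodule B (F (n + 1))) := by
        intro β hβ hdβ
        obtain ⟨y', hy'⟩ := ih hL' n (x - β) hdβ
        refine ⟨y', ?_⟩
        rw [JL_cons, Submodule.sup_smul]
        refine Submodule.mem_sup.2 ⟨β, hβ, (x - β) - d (n + 1) y', hy', by abel⟩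
      cases n with
      | zero =>
          have hεz : ε (h • z) = 0 := by
            rw [map_smul, Algebra.smul_def, hhC, zero_mul]
          obtain ⟨y, hy⟩ := hex0 _ hεz
          refine hfinish (h ^ (p - 1) • y)
            (Submodule.smul_mem_smul hh1Jf Submodule.mem_top) ?_
          have : d 0 (x - h ^ (p - 1) • y) = ι := by
            rw [map_sub, map_smul, hy, hcollapse, ← hsum]; abel
          rw [this]; exact hι
      | succ m =>
          haveI := hproj m
          have hda : d m (g • z) ∈ I • (⊤ : Submodule B (F m)) := by
            have h0 : d m (d (m + 1) x) = 0 := hdd m x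
            have h1 : d m (g • z) + d m ι = 0 := by
              have h2 := congrArg (d m) hsum
              rw [map_add, h0] at h2
              exact h2
            rw [eq_neg_of_add_eq_zero_left h1]
            exact neg_mem (smulTop_map I (d m) hι)
          have htor : h • d m z ∈ I • (⊤ : Submodule B (F m)) := by
            apply torsion_descent hp2 I hI h
            rw [map_smul] at hda
            rw [hg]
            exact hda
          have hdhz : d m (h • z) ∈ I • (⊤ : Submodule B (F m)) := by
            rw [map_smul]; exact htor
          obtain ⟨y, hy⟩ := ih hL' m (h • z) hdhz
          refine hfinish (h ^ (p - 1) • y)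
            (Submodule.smul_mem_smul hh1Jf Submodule.mem_top) ?_
          have hcalc : d (m + 1) (x - h ^ (p - 1) • y)
              = h ^ (p - 1) • (h • z - d (m + 1) y) + ι := by
            rw [map_sub, map_smul, ← hsum, smul_sub, hcollapse]; abel
          rw [hcalc]
          exact add_mem (Submodule.smul_mem _ _ hy) hι

end Chase


section Top

variable [ExpChar B p] [PerfectRing B p]
variable {C : Type u} [CommRing C] [Algebra B C] [ExpChar C p] [PerfectRing C p]
variable {F : ℕ → Type u} [∀ n, AddCommGroup (F n)] [∀ n, Module B (F n)]

lemma ker_rt_iter {g : B} (hg : algebraMap B C g = 0) (k : ℕ) :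
    algebraMap B C ((rt B p)^[k] g) = 0 := by
  induction k with
  | zero => exact hg
  | succ k ihk =>
      rw [Function.iterate_succ_apply']
      apply (frobeniusEquiv C p).injective
      rw [map_zero]
      show frobenius C p _ = 0
      rw [frobenius_def, ← map_pow, rt_pow, ihk]

lemma exists_list_of_mem_ker_smul {M : Type u} [AddCommGroup M] [Module B M]
    {x : M} (hx : x ∈ (RingHom.ker (algebraMap B C)) • (⊤ : Submodule B M)) :
    ∃ L : List B, (∀ g ∈ L, algebraMap B C g = 0) ∧ x ∈ JL p L • (⊤ : Submodule B M) := by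
  refine Submodule.smul_induction_on hx (fun r hr m _ => ?_) ?_
  · refine ⟨[r], by simpa [RingHom.mem_ker] using hr, ?_⟩
    exact Submodule.smul_mem_smul
      (Ideal.subset_span (self_mem_genSet (p := p) List.mem_cons_self)) Submodule.mem_top
  · rintro a b ⟨L₁, hL₁, ha⟩ ⟨L₂, hL₂, hb⟩
    refine ⟨L₁ ++ L₂, ?_, ?_⟩
    · intro g hg
      rcases List.mem_append.1 hg with h | h
      exacts [hL₁ g h, hL₂ g h]
    · have m1 : JL p L₁ ≤ JL p (L₁ ++ L₂) :=
        Ideal.span_mono (genSet_mono fun g hg => List.mem_append.2 (Or.inl hg))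
      have m2 : JL p L₂ ≤ JL p (L₁ ++ L₂) :=
        Ideal.span_mono (genSet_mono fun g hg => List.mem_append.2 (Or.inr hg))
      exact add_mem (Submodule.smul_mono_left m1 ha) (Submodule.smul_mono_left m2 hb)

lemma JL_le_ker {L : List B} (hL : ∀ g ∈ L, algebraMap B C g = 0) :
    JL p L ≤ RingHom.ker (algebraMap B C) := by
  apply Ideal.span_le.2
  rintro x ⟨g, hg, k, rfl⟩
  exact RingHom.mem_ker.2 (ker_rt_iter (hL g hg) k)

theorem ker_claim (hp : p.Prime)
    (d : ∀ n, F (n + 1) →ₗ[B] F n) (ε : F 0 →ₗ[B] C)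
    (hproj : ∀ n, Module.Projective B (F n))
    (hdd : ∀ n (x : F (n + 2)), d n (d (n + 1) x) = 0)
    (hex : ∀ n (x : F (n + 1)), d n x = 0 → ∃ y, d (n + 1) y = x)
    (hex0 : ∀ x : F 0, ε x = 0 → ∃ y, d 0 y = x) :
    ∀ n (x : F (n + 1)), d n x ∈ (RingHom.ker (algebraMap B C)) • (⊤ : Submodule B (F n)) →
      ∃ y : F (n + 2),
        x - d (n + 1) y ∈ (RingHom.ker (algebraMap B C)) • (⊤ : Submodule B (F (n + 1))) := by
  intro n x hx
  obtain ⟨L, hL, hmem⟩ := exists_list_of_mem_ker_smul (p := p) hx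
  have hLgen : ∀ g ∈ genSet (p := p) L, algebraMap B C g = 0 := by
    rintro g ⟨g₀, hg₀, k, rfl⟩
    exact ker_rt_iter (hL g₀ hg₀) k
  obtain ⟨y, hy⟩ := main_claim hp.two_le d ε hproj hdd hex hex0 L hLgen n x hmem
  exact ⟨y, Submodule.smul_mono_left (JL_le_ker hL) hy⟩

open TensorProduct in
theorem tensor_exact (hp : p.Prime) (hsurj : Function.Surjective (algebraMap B C))
    (d : ∀ n, F (n + 1) →ₗ[B] F n) (ε : F 0 →ₗ[B] C)
    (hproj : ∀ n, Module.Projective B (F n))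
    (hdd : ∀ n (x : F (n + 2)), d n (d (n + 1) x) = 0)
    (hex : ∀ n (x : F (n + 1)), d n x = 0 → ∃ y, d (n + 1) y = x)
    (hex0 : ∀ x : F 0, ε x = 0 → ∃ y, d 0 y = x) (n : ℕ) :
    Function.Exact (LinearMap.lTensor C (d (n + 1))) (LinearMap.lTensor C (d n)) := by
  classical
  set J := RingHom.ker (algebraMap B C) with hJ
  -- the natural map x ↦ 1 ⊗ x
  have hη := fun m : ℕ => (TensorProduct.mk B C (F m) 1 : F m →ₗ[B] C ⊗[B] F m)
  set η : ∀ m : ℕ, F m →ₗ[B] C ⊗[B] F m :=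
    fun m => (TensorProduct.mk B C (F m) 1) with hηdef
  have hηsurj : ∀ m, Function.Surjective (η m) := by
    intro m ξ
    induction ξ using TensorProduct.induction_on with
    | zero => exact ⟨0, map_zero _⟩
    | tmul c x =>
        obtain ⟨b, rfl⟩ := hsurj c
        refine ⟨b • x, ?_⟩
        show (1 : C) ⊗ₜ[B] (b • x) = _
        rw [← smul_tmul, Algebra.algebraMap_eq_smul_one]
    | add a b iha ihb =>
        obtain ⟨xa, hxa⟩ := iha
        obtain ⟨xb, hxb⟩ := ihb
        exact ⟨xa + xb, by rw [map_add, hxa, hxb]⟩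
  have hηker : ∀ m (x : F m), η m x = 0 ↔ x ∈ J • (⊤ : Submodule B (F m)) := by
    intro m x
    constructor
    · intro hx
      have hexact : Function.Exact (LinearMap.rTensor (F m) (J.subtype))
          (LinearMap.rTensor (F m) (Algebra.linearMap B C)) := by
        apply rTensor_exact (F m) _ hsurj
        intro b
        constructor
        · intro hb
          exact ⟨⟨b, RingHom.mem_ker.2 hb⟩, rfl⟩
        · rintro ⟨⟨b', hb'⟩, rfl⟩
          exact hb'
      have h1 : LinearMap.rTensor (F m) (Algebra.linearMap B C)
          ((TensorProduct.lid B (F m)).symm x) = 0 := by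
        have : (TensorProduct.lid B (F m)).symm x = (1 : B) ⊗ₜ[B] x := rfl
        rw [this, LinearMap.rTensor_tmul]
        simpa using (show (1 : C) ⊗ₜ[B] x = 0 from hx)
      obtain ⟨w, hw⟩ := (hexact _).1 h1
      have : x = (TensorProduct.lid B (F m))
          (LinearMap.rTensor (F m) J.subtype w) := by
        rw [hw]; simp
      rw [this]
      clear hw this
      induction w using TensorProduct.induction_on with
      | zero => simpa using zero_mem _
      | tmul j y =>
          rw [LinearMap.rTensor_tmul, TensorProduct.lid_tmul]
          exact Submodule.smul_mem_smul j.2 Submodule.mem_top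
      | add a b iha ihb =>
          rw [map_add, map_add]
          exact add_mem iha ihb
    · intro hx
      refine Submodule.smul_induction_on hx (fun r hr y _ => ?_) ?_
      · show (1 : C) ⊗ₜ[B] (r • y) = 0
        have hr0 : algebraMap B C r = 0 := hr
        rw [← smul_tmul, ← Algebra.algebraMap_eq_smul_one, hr0, TensorProduct.zero_tmul]
      · intro a b ha hb
        rw [map_add, ha, hb, add_zero]
  have hcomm : ∀ m (x : F (m + 1)),
      LinearMap.lTensor C (d m) (η (m + 1) x) = η m (d m x) := by
    intro m x
    show LinearMap.lTensor C (d m) ((1 : C) ⊗ₜ[B] x) = _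
    rw [LinearMap.lTensor_tmul]
    rfl
  intro ξ
  constructor
  · intro hξ
    obtain ⟨x, rfl⟩ := hηsurj (n + 1) ξ
    have h2 : η n (d n x) = 0 := by rw [← hcomm, hξ]
    have h3 : d n x ∈ J • (⊤ : Submodule B (F n)) := (hηker _ _).1 h2
    obtain ⟨y, hy⟩ := ker_claim hp d ε hproj hdd hex hex0 n x h3
    refine ⟨η (n + 2) y, ?_⟩
    have h4 : η (n + 1) (x - d (n + 1) y) = 0 := (hηker _ _).2 hy
    rw [map_sub] at h4
    rw [hcomm]
    have := sub_eq_zero.1 h4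
    exact this.symm
  · rintro ⟨w, rfl⟩
    rw [← LinearMap.comp_apply, ← LinearMap.lTensor_comp]
    have hcz : (d n).comp (d (n + 1)) = 0 := LinearMap.ext fun x => hdd n x
    rw [hcz, LinearMap.lTensor_zero]
    rfl

end Top

end DIPS

open TensorProduct in
/-- Let `B → C` be a surjective homomorphism of perfect
`𝔽_p`-algebras.  Then the multiplication map `C ⊗_B C → C` is an isomorphism
and `Tor_i^B(C, C) = 0` for `i > 0`; i.e. `C ⊗_B^L C ≅ C`. -/
theorem derived_idempotent_of_perfect_surjection
    (p : ℕ) (hp : p.Prime)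
    (B : Type u) [CommRing B] [ExpChar B p] [PerfectRing B p]
    (C : Type u) [CommRing C] [ExpChar C p] [PerfectRing C p]
    [Algebra B C] (hsurj : Function.Surjective (algebraMap B C)) :
    Function.Bijective (Algebra.TensorProduct.lmul' (S := C) B) ∧
    ∀ i : ℕ, 0 < i →
      Limits.IsZero
        (((Tor (ModuleCat.{u} B) i).obj (ModuleCat.of B C)).obj
          (ModuleCat.of B C)) := by
  constructor
  · -- bijectivity of multiplication
    have key : ∀ ξ : C ⊗[B] C, (1 : C) ⊗ₜ[B] (Algebra.TensorProduct.lmul' (S := C) B ξ) = ξ := by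
      intro ξ
      induction ξ using TensorProduct.induction_on with
      | zero => rw [map_zero, TensorProduct.tmul_zero]
      | tmul c c' =>
          obtain ⟨b, rfl⟩ := hsurj c
          rw [Algebra.TensorProduct.lmul'_apply_tmul]
          have h1 : algebraMap B C b * c' = b • c' := (Algebra.smul_def b c').symm
          rw [h1, ← TensorProduct.smul_tmul, ← Algebra.algebraMap_eq_smul_one]
      | add a b iha ihb =>
          rw [map_add, TensorProduct.tmul_add, iha, ihb]
    constructor
    · intro a b hab
      rw [← key a, ← key b, hab]
    · intro c
      exact ⟨1 ⊗ₜ c, by rw [Algebra.TensorProduct.lmul'_apply_tmul, one_mul]⟩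
  · -- Tor vanishing
    intro i hi
    obtain ⟨n, rfl⟩ : ∃ n, i = n + 1 := ⟨i - 1, by omega⟩
    set X : ModuleCat.{u} B := ModuleCat.of B C with hX
    obtain ⟨P⟩ : Nonempty (ProjectiveResolution X) := HasProjectiveResolution.out
    set Fct := (MonoidalCategory.tensoringLeft (ModuleCat.{u} B)).obj X with hFct
    -- concrete data
    let FF : ℕ → Type u := fun m => P.complex.X m
    let dd : ∀ m, FF (m + 1) →ₗ[B] FF m := fun m => (P.complex.d (m + 1) m).hom
    let εε : FF 0 →ₗ[B] C := (P.π.f 0).hom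
    have hproj : ∀ m, Module.Projective B (FF m) := by
      intro m
      have h1 : Projective (P.complex.X m) := P.projective m
      exact (IsProjective.iff_projective (P.complex.X m)).2 h1
    have hdd : ∀ m (x : FF (m + 2)), dd m (dd (m + 1) x) = 0 := by
      intro m x
      have h1 := P.complex.d_comp_d (m + 2) (m + 1) m
      exact congrArg (fun f => ModuleCat.Hom.hom f x) h1
    have hex : ∀ m (x : FF (m + 1)), dd m x = 0 → ∃ y, dd (m + 1) y = x := by
      intro m
      have h1 := (ShortComplex.moduleCat_exact_iff _).1 (P.exact_succ m)
      exact fun x hx => h1 x hx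
    have hex0 : ∀ x : FF 0, εε x = 0 → ∃ y, dd 0 y = x := by
      intro x
      have h1 := (ShortComplex.moduleCat_exact_iff _).1 P.exact₀
      exact fun hx => h1 x hx
    have hmain := DIPS.tensor_exact (p := p) hp hsurj dd εε hproj hdd hex hex0 n
    refine Limits.IsZero.of_iso ?_ (P.isoLeftDerivedObj Fct (n + 1))
    set K := (Fct.mapHomologicalComplex (ComplexShape.down ℕ)).obj P.complex with hK
    have hexact : K.ExactAt (n + 1) := by
      rw [K.exactAt_iff' (n + 2) (n + 1) n (by simp) (by simp)]
      rw [ShortComplex.moduleCat_exact_iff]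
      intro x2 hx2
      exact (hmain x2).1 (by exact hx2)
    exact (HomologicalComplex.exactAt_iff_isZero_homology K (n + 1)).1 hexact
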